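/- Assume A and B. Then for every player i ∈ N and every ℓ ∈ L_0, sup_{φ∈Φ} |J_i^{ℓ,η(m)}(φ) − J_i^ℓ(φ)| → 0 as m → ∞. -/

import Mathlib

open MeasureTheory ProbabilityTheory Filter Topology
open scoped ENNReal NNReal

namespace CSGame

/-- The joint action space of the players. -/
abbrev JA {n : ℕ} (A : Fin n → Type) : Type := (i : Fin n) → A i

/-- The data of a constrained discounted stochastic Markov game:
countable state space `X`, Borel action spaces `A i` with compact admissible
action sets `As i x`, transition probability `p`, initial distribution `η`,
discount factor `α`, cost/constraint functions `c i ℓ` (`ℓ = 0` is the cost,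
`ℓ ∈ L = {1,…,l}` are the constraints) and constraint bounds `κ i ℓ`. -/
structure GameData (n l : ℕ) (X : Type) (A : Fin n → Type)
    [MeasurableSpace X] [∀ i, MeasurableSpace (A i)] [∀ i, TopologicalSpace (A i)] where
  As : (i : Fin n) → X → Set (A i)
  p : X → JA A → Measure X
  η : Measure X
  α : ℝ
  c : Fin n → Fin (l + 1) → X → JA A → ℝ
  κ : Fin n → Fin (l + 1) → ℝ
  hAs_ne : ∀ i x, (As i x).Nonempty
  hAs_cpt : ∀ i x, IsCompact (As i x)
  hp : ∀ x a, IsProbabilityMeasure (p x a)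
  hpm : ∀ x y, Measurable fun a => p x a {y}
  hη : IsProbabilityMeasure η
  hα0 : 0 < α
  hα1 : α < 1
  hc : ∀ i ℓ x, Measurable (c i ℓ x)

variable {n l : ℕ}
variable {X : Type} [Countable X] [MeasurableSpace X] [DiscreteMeasurableSpace X]
  [TopologicalSpace X] [DiscreteTopology X] [BorelSpace X] [SecondCountableTopology X]
variable {A : Fin n → Type} [∀ i, MeasurableSpace (A i)] [∀ i, TopologicalSpace (A i)]
  [∀ i, PolishSpace (A i)] [∀ i, BorelSpace (A i)]

/-- The set of feasible action profiles in state `x` (the section of `𝕂` at `x`). -/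
def jointSet (G : GameData n l X A) (x : X) : Set (JA A) :=
  Set.univ.pi fun i => G.As i x

/-- Histories of the game: `Hist X AA t` records the initial state and `t`
state-action transitions, ending with the current state (this is `H^{t+1}`). -/
def Hist (X AA : Type) : ℕ → Type
  | 0 => X
  | t + 1 => Hist X AA t × AA × X

noncomputable instance histMS (X AA : Type) [MeasurableSpace X] [MeasurableSpace AA] :
    ∀ t, MeasurableSpace (Hist X AA t)
  | 0 => inferInstanceAs (MeasurableSpace X)
  | t + 1 =>
      letI := histMS X AA t
      inferInstanceAs (MeasurableSpace (Hist X AA t × AA × X))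

/-- The current (last) state of a history. -/
def lastState (X AA : Type) : ∀ t, Hist X AA t → X
  | 0, h => h
  | _ + 1, h => h.2.2

theorem measurable_lastState (X AA : Type) [MeasurableSpace X] [MeasurableSpace AA] :
    ∀ t, Measurable (lastState X AA t)
  | 0 => measurable_id
  | _ + 1 => measurable_snd.comp measurable_snd

variable (G : GameData n l X A)

/-- A (history dependent, randomised) strategy of player `i`: a sequence of
transition probabilities from histories to the action space of player `i`,
concentrated on the admissible action set at the current state. -/
structure Strategy (i : Fin n) where
  f : ∀ t, Hist X (JA A) t → ProbabilityMeasure (A i)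
  meas : ∀ t (s : Set (A i)), MeasurableSet s →
    Measurable fun h => (f t h : Measure (A i)) s
  supp : ∀ t h, f t h (G.As i (lastState X (JA A) t h)) = 1

/-- A stationary strategy of player `i`: a transition probability from states to
actions, concentrated on the admissible action set. -/
def Stat (i : Fin n) : Type :=
  {φ : X → ProbabilityMeasure (A i) // ∀ x, φ x (G.As i x) = 1}

noncomputable instance (i : Fin n) : TopologicalSpace (Stat G i) :=
  inferInstanceAs (TopologicalSpace
    {φ : X → ProbabilityMeasure (A i) // ∀ x, φ x (G.As i x) = 1})

/-- Multi-strategies: one strategy for each player. -/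
abbrev MultiStrategy : Type _ := ∀ i, Strategy G i

/-- Stationary multi-strategies (the set `Φ`). -/
abbrev StatProfile : Type _ := ∀ i, Stat G i

noncomputable instance : TopologicalSpace (StatProfile G) :=
  inferInstanceAs (TopologicalSpace (∀ i, Stat G i))

/-- The strategy induced by a stationary strategy. -/
noncomputable def ofStat (i : Fin n) (φ : Stat G i) : Strategy G i where
  f := fun t h => φ.1 (lastState X (JA A) t h)
  meas := fun t _s _hs =>
    (Measurable.of_discrete (f := fun x => (φ.1 x : Measure (A i)) _s)).comp
      (measurable_lastState X (JA A) t)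
  supp := fun t h => φ.2 _

/-- The multi-strategy induced by a stationary multi-strategy. -/
noncomputable def ofStatAll (φ : StatProfile G) : MultiStrategy G :=
  fun i => ofStat G i (φ i)

/-- `[π_{-i}, σ]` : player `i` deviates to `σ`, the others keep `π`. -/
noncomputable def combine (π : MultiStrategy G) (i : Fin n) (σ : Strategy G i) :
    MultiStrategy G :=
  Function.update π i σ

/-- `[φ_{-i}, γ]` for stationary profiles. -/
noncomputable def updStat (φ : StatProfile G) (i : Fin n) (γ : Stat G i) :
    StatProfile G :=
  Function.update φ i γ

/-- The joint (product) distribution of the players' actions after history `h`. -/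
noncomputable def jointLaw (π : MultiStrategy G) (t : ℕ) (h : Hist X (JA A) t) :
    Measure (JA A) :=
  Measure.pi fun i => ((π i).f t h : Measure (A i))

/-- The distribution of histories of length `t` under the multi-strategy `π`,
the transition probability `G.p` and the initial distribution `η'`
(the finite-dimensional marginals of the Ionescu–Tulcea measure `P^π_{η'}`). -/
noncomputable def histMeas (η' : Measure X) (π : MultiStrategy G) :
    ∀ t, Measure (Hist X (JA A) t)
  | 0 => η'
  | t + 1 =>
      (histMeas η' π t).bind fun h =>
        (jointLaw G π t h).bind fun a =>
          (G.p (lastState X (JA A) t h) a).map fun y =>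
            (show Hist X (JA A) (t + 1) from (h, a, y))

/-- Expected value of `f (x^{t+1}, a^{t+1})` under `π` (states enumerated from `1`
in the paper, from `0` here). -/
noncomputable def stageExp (η' : Measure X) (π : MultiStrategy G) (t : ℕ)
    (f : X → JA A → ℝ) : ℝ :=
  ∫ h, (∫ a, f (lastState X (JA A) t h) a ∂(jointLaw G π t h)) ∂(histMeas G η' π t)

/-- The expected discounted cost functional
`J(π) = (1-α) E^π_{η'} [∑_{t≥1} α^{t-1} f(x^t,a^t)]`. -/
noncomputable def Jfun (η' : Measure X) (f : X → JA A → ℝ) (π : MultiStrategy G) : ℝ :=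
  (1 - G.α) * ∑' t : ℕ, G.α ^ t * stageExp G η' π t f

/-- `J_i^ℓ(π)` of the paper. -/
noncomputable def J (i : Fin n) (ℓ : Fin (l + 1)) (π : MultiStrategy G) : ℝ :=
  Jfun G G.η (G.c i ℓ) π

/-- `π_i ∈ Δ_i(π_{-i})` : all constraints of player `i` are satisfied. -/
def Feas (i : Fin n) (π : MultiStrategy G) : Prop :=
  ∀ ℓ : Fin (l + 1), ℓ ≠ 0 → J G i ℓ π ≤ G.κ i ℓ

/-- Expectation of `w(x^{t+1})` (as an extended nonnegative real). -/
noncomputable def wStateExp (η' : Measure X) (π : MultiStrategy G) (t : ℕ)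
    (w : X → ℝ) : ℝ≥0∞ :=
  ∫⁻ h, ENNReal.ofReal (w (lastState X (JA A) t h)) ∂(histMeas G η' π t)

/-- Assumption A(i): continuity of the transition probability in the actions. -/
def AssumptionA1 : Prop :=
  ∀ x y, ContinuousOn (fun a => G.p x a {y}) (jointSet G x)

/-- Assumption A: continuity of the transition probability and of the
cost/constraint functions in the actions. -/
def AssumptionA : Prop :=
  AssumptionA1 G ∧ ∀ i ℓ x, ContinuousOn (G.c i ℓ x) (jointSet G x)

/-- Assumption B for the weight function `w`: `w ≥ 1` bounds all the costs on `𝕂`,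
the discounted tails `sup_π (1-α) E^π_η[∑_{t≥k} α^{t-1} w(x^t)]` vanish as `k → ∞`,
and for each stage `t` the family `{w(x^t)}` is uniformly integrable over all
multi-strategies. -/
def AssumptionB (w : X → ℝ) : Prop :=
  (∀ x, 1 ≤ w x) ∧
  (∀ i ℓ x a, a ∈ jointSet G x → |G.c i ℓ x a| ≤ w x) ∧
  Tendsto (fun k : ℕ => ⨆ π : MultiStrategy G,
      ENNReal.ofReal (1 - G.α) *
        ∑' t : ℕ, ENNReal.ofReal G.α ^ (k + t) * wStateExp G G.η π (k + t) w)
    atTop (𝓝 0) ∧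
  ∀ t : ℕ, Tendsto (fun k : ℕ => ⨆ π : MultiStrategy G,
      ∫⁻ h in {h | (k : ℝ) ≤ w (lastState X (JA A) t h)},
        ENNReal.ofReal (w (lastState X (JA A) t h)) ∂(histMeas G G.η π t))
    atTop (𝓝 0)

/-- Assumption C (Slater condition). -/
def AssumptionC : Prop :=
  ∀ (φ : StatProfile G) (i : Fin n), ∃ π : Strategy G i,
    ∀ ℓ : Fin (l + 1), ℓ ≠ 0 → J G i ℓ (combine G (ofStatAll G φ) i π) < G.κ i ℓ

/-- Assumption D: the initial distribution charges every state. -/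
def AssumptionD : Prop :=
  ∀ x : X, 0 < G.η {x}

/-- Assumption W (weighted-norm conditions of Wessels). -/
def AssumptionW (w : X → ℝ) : Prop :=
  (∀ x, 1 ≤ w x) ∧
  (∀ i ℓ x a, a ∈ jointSet G x → |G.c i ℓ x a| ≤ w x) ∧
  (∃ δ : ℝ, 1 ≤ δ ∧ δ * G.α < 1 ∧ ∀ x a, a ∈ jointSet G x →
      ∫⁻ y, ENNReal.ofReal (w y) ∂(G.p x a) ≤ ENNReal.ofReal (δ * w x)) ∧
  (∀ x, ContinuousOn (fun a => ∫⁻ y, ENNReal.ofReal (w y) ∂(G.p x a)) (jointSet G x)) ∧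
  (∫⁻ y, ENNReal.ofReal (w y) ∂G.η) < ⊤

/-- All cost and constraint functions are bounded. -/
def BoundedCosts : Prop :=
  ∀ i (ℓ : Fin (l + 1)), ∃ C : ℝ, ∀ x a, |G.c i ℓ x a| ≤ C

/-- A stationary multi-strategy `φ` is a Nash equilibrium of the constrained game:
it is feasible, and no player can lower his discounted cost by a unilateral
deviation to any (history dependent) strategy satisfying his constraints. -/
def IsNashStat (φ : StatProfile G) : Prop :=
  (∀ i, Feas G i (ofStatAll G φ)) ∧
  ∀ (i : Fin n) (σ : Strategy G i), Feas G i (combine G (ofStatAll G φ) i σ) →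
    J G i 0 (ofStatAll G φ) ≤ J G i 0 (combine G (ofStatAll G φ) i σ)

section Occupation

/-- A correlated strategy of the players. -/
structure CorrStrategy where
  f : ∀ t, Hist X (JA A) t → ProbabilityMeasure (JA A)
  meas : ∀ t (s : Set (JA A)), MeasurableSet s →
    Measurable fun h => (f t h : Measure (JA A)) s
  supp : ∀ t h, f t h (jointSet G (lastState X (JA A) t h)) = 1

/-- History distributions under a correlated strategy. -/
noncomputable def histMeasC (π : CorrStrategy G) : ∀ t, Measure (Hist X (JA A) t)
  | 0 => G.η
  | t + 1 =>
      (histMeasC π t).bind fun h =>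
        ((π.f t h : Measure (JA A))).bind fun a =>
          (G.p (lastState X (JA A) t h) a).map fun y =>
            (show Hist X (JA A) (t + 1) from (h, a, y))

/-- The occupation measure `ρ(K') = (1-α) E^π_η [∑_{t≥1} α^{t-1} 1_{K'}(x^t,a^t)]`
of a correlated strategy, as a measure on the state–action pairs. -/
noncomputable def occ (π : CorrStrategy G) : Measure (X × JA A) :=
  ENNReal.ofReal (1 - G.α) •
    Measure.sum fun t : ℕ => ENNReal.ofReal G.α ^ t •
      ((histMeasC G π t).bind fun h =>
        (π.f t h : Measure (JA A)).map fun a => (lastState X (JA A) t h, a))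

/-- The set `𝓜` of occupation measures of correlated strategies. -/
def OccSet : Set (ProbabilityMeasure (X × JA A)) :=
  {ρ | ∃ π : CorrStrategy G, (ρ : Measure (X × JA A)) = occ G π}

/-- Projection of a state–action pair onto the coordinates of player `i`. -/
def projAct (i : Fin n) : X × JA A → X × A i := fun q => (q.1, q.2 i)

/-- The set `𝓜_i` of statewise projections of occupation measures onto `𝕂_i`. -/
def MiSet (i : Fin n) : Set (ProbabilityMeasure (X × A i)) :=
  {μ | ∃ ρ ∈ OccSet G, (μ : Measure (X × A i)) = (ρ : Measure (X × JA A)).map (projAct i)}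

/-- The marginal `μ̂(x) = μ({x} × A_i(x))`. -/
noncomputable def marg (i : Fin n) (μ : ProbabilityMeasure (X × A i)) (x : X) : ℝ≥0∞ :=
  (μ : Measure (X × A i)) ({x} ×ˢ G.As i x)

/-- `μ = μ̂ φ` : `φ` disintegrates `μ`, i.e. `μ({x} × B) = φ(B|x) μ̂(x)`. -/
def Disint (i : Fin n) (μ : ProbabilityMeasure (X × A i)) (φ : Stat G i) : Prop :=
  ∀ x (B : Set (A i)), MeasurableSet B → B ⊆ G.As i x →
    (μ : Measure (X × A i)) ({x} ×ˢ B) = (φ.1 x B : ℝ≥0∞) * marg G i μ x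

/-- The occupation measure on state–action pairs of a multi-strategy. -/
noncomputable def occMulti (η' : Measure X) (π : MultiStrategy G) : Measure (X × JA A) :=
  ENNReal.ofReal (1 - G.α) •
    Measure.sum fun t : ℕ => ENNReal.ofReal G.α ^ t •
      ((histMeas G η' π t).bind fun h =>
        (jointLaw G π t h).map fun a => (lastState X (JA A) t h, a))

end Occupation

section COP

/-- The product distribution on action profiles in state `x` in which player `i`
plays the fixed action `ai` and every player `j ≠ i` plays `φ j`. -/
noncomputable def statJoint (φ : StatProfile G) (i : Fin n) (x : X) (ai : A i) :
    Measure (JA A) :=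
  Measure.pi fun j =>
    if h : j = i then Measure.dirac (cast (congrArg A h.symm) ai)
    else ((φ j).1 x : Measure (A j))

/-- `c_i^ℓ(x, [φ_{-i}(x), a_i])`. -/
noncomputable def cbar (φ : StatProfile G) (i : Fin n) (ℓ : Fin (l + 1)) (x : X)
    (ai : A i) : ℝ :=
  ∫ a, G.c i ℓ x a ∂(statJoint G φ i x ai)

/-- `p(y | x, [φ_{-i}(x), a_i])`. -/
noncomputable def pbar (φ : StatProfile G) (i : Fin n) (y x : X) (ai : A i) : ℝ≥0∞ :=
  ∫⁻ a, G.p x a {y} ∂(statJoint G φ i x ai)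

/-- Feasibility in the constrained optimisation problem `COP(φ_{-i})`:
`μ ∈ Pr(𝕂_i)` satisfies the constraint inequalities and the characteristic
equations of occupation measures. -/
def COPFeasible (φ : StatProfile G) (i : Fin n)
    (μ : ProbabilityMeasure (X × A i)) : Prop :=
  (μ : Measure (X × A i)) {q : X × A i | q.2 ∈ G.As i q.1} = 1 ∧
  (∀ ℓ : Fin (l + 1), ℓ ≠ 0 →
    ∫ q : X × A i, cbar G φ i ℓ q.1 q.2 ∂(μ : Measure (X × A i)) ≤ G.κ i ℓ) ∧
  ∀ x : X, (μ : Measure (X × A i)) ({x} ×ˢ G.As i x) =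
    ENNReal.ofReal (1 - G.α) * G.η {x} +
      ENNReal.ofReal G.α *
        ∫⁻ q : X × A i, pbar G φ i x q.1 q.2 ∂(μ : Measure (X × A i))

/-- The objective of `COP(φ_{-i})`. -/
noncomputable def COPObj (φ : StatProfile G) (i : Fin n)
    (μ : ProbabilityMeasure (X × A i)) : ℝ :=
  ∫ q : X × A i, cbar G φ i 0 q.1 q.2 ∂(μ : Measure (X × A i))

/-- The solution set `𝓞_i(φ_{-i})` of `COP(φ_{-i})`. -/
def COPSol (φ : StatProfile G) (i : Fin n) : Set (ProbabilityMeasure (X × A i)) :=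
  {μ | COPFeasible G φ i μ ∧
    ∀ ν, COPFeasible G φ i ν → COPObj G φ i μ ≤ COPObj G φ i ν}

end COP

section Perturbed

/-- `η̃` is a probability measure charging exactly the `η`-null states `X_0`. -/
def IsPerturb (ηt : Measure X) : Prop :=
  IsProbabilityMeasure ηt ∧ (∀ x, G.η {x} = 0 → 0 < ηt {x}) ∧
    ∀ x, G.η {x} ≠ 0 → ηt {x} = 0

/-- The perturbed initial distribution `η(m) = (1 - 1/m) η + (1/m) η̃`. -/
noncomputable def etam (ηt : Measure X) (m : ℕ) : Measure X :=
  ENNReal.ofReal (1 - 1 / (m : ℝ)) • G.η + ENNReal.ofReal (1 / (m : ℝ)) • ηt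

/-- The truncation `c_i^{ℓ,m}` of `c_i^ℓ` at the level `√m`. -/
noncomputable def ctrunc (i : Fin n) (ℓ : Fin (l + 1)) (m : ℕ) (x : X) (a : JA A) : ℝ :=
  max (-Real.sqrt m) (min (G.c i ℓ x a) (Real.sqrt m))

/-- `J_i^{ℓ,η(m)}`: discounted cost with truncated costs and perturbed initial
distribution. -/
noncomputable def Jm (ηt : Measure X) (m : ℕ) (i : Fin n) (ℓ : Fin (l + 1))
    (π : MultiStrategy G) : ℝ :=
  Jfun G (etam G ηt m) (ctrunc G i ℓ m) π

/-- The perturbed constraint bounds `κ_i^{ℓ,m} = (1 - 1/m) κ_i^ℓ + 1/√m`. -/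
noncomputable def kappam (i : Fin n) (ℓ : Fin (l + 1)) (m : ℕ) : ℝ :=
  (1 - 1 / (m : ℝ)) * G.κ i ℓ + 1 / Real.sqrt m

/-- `π_i ∈ Δ_i^m(π_{-i})` : the constraints of the `m`-CSG hold. -/
def FeasM (ηt : Measure X) (m : ℕ) (i : Fin n) (π : MultiStrategy G) : Prop :=
  ∀ ℓ : Fin (l + 1), ℓ ≠ 0 → Jm G ηt m i ℓ π ≤ kappam G i ℓ m

end Perturbed

end CSGame

open CSGame

namespace CSGame

variable {n l : ℕ}
variable {X : Type} [Countable X] [MeasurableSpace X] [DiscreteMeasurableSpace X]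
  [TopologicalSpace X] [DiscreteTopology X] [BorelSpace X] [SecondCountableTopology X]
variable {A : Fin n → Type} [∀ i, MeasurableSpace (A i)] [∀ i, TopologicalSpace (A i)]
  [∀ i, PolishSpace (A i)] [∀ i, BorelSpace (A i)]
variable (G : GameData n l X A)

section Stmt14Aux

local notation "L" => lastState X (JA A)

/-- Statewise joint action law of a stationary profile. -/
noncomputable def Qm (φ : StatProfile G) (x : X) : Measure (JA A) :=
  Measure.pi fun i => ((φ i).1 x : Measure (A i))

instance isProb_Qm (φ : StatProfile G) (x : X) : IsProbabilityMeasure (Qm G φ x) := by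
  unfold Qm; infer_instance

lemma measurableSet_As (i : Fin n) (x : X) : MeasurableSet (G.As i x) :=
  (G.hAs_cpt i x).isClosed.measurableSet

lemma measurableSet_jointSet (x : X) : MeasurableSet (jointSet G x) :=
  MeasurableSet.univ_pi fun i => measurableSet_As G i x

lemma Qm_jointSet (φ : StatProfile G) (x : X) : Qm G φ x (jointSet G x) = 1 := by
  rw [Qm, jointSet, Measure.pi_pi]
  refine Finset.prod_eq_one fun i _ => ?_
  have h2 := ((φ i).1 x).ennreal_coeFn_eq_coeFn_toMeasure (G.As i x)
  rw [← h2, (φ i).2 x, ENNReal.coe_one]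

lemma ae_jointSet (φ : StatProfile G) (x : X) :
    ∀ᵐ a ∂(Qm G φ x), a ∈ jointSet G x := by
  rw [ae_iff]
  have h := measure_compl (μ := Qm G φ x) (measurableSet_jointSet G x) (measure_ne_top _ _)
  rw [Qm_jointSet, measure_univ, tsub_self] at h
  exact h

lemma jointLaw_ofStatAll (φ : StatProfile G) (t : ℕ) (h : Hist X (JA A) t) :
    jointLaw G (ofStatAll G φ) t h = Qm G φ (L t h) := rfl

/-- Decomposition of a measure on the countable state space over singletons,
applied to sections. -/
lemma measurable_p_section {γ β : Type*} [MeasurableSpace γ] [MeasurableSpace β]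
    (x : X) (k : γ → JA A) (hk : Measurable k) {s : Set β}
    (hs : MeasurableSet s) (e : γ → X → β) (he : ∀ y, Measurable fun g => e g y) :
    Measurable fun g : γ => G.p x (k g) {y | e g y ∈ s} := by
  have hpt : ∀ g, G.p x (k g) {y | e g y ∈ s}
      = ∑' y : X, ({g' : γ | e g' y ∈ s}).indicator (fun g' => G.p x (k g') {y}) g := by
    intro g
    rw [← Measure.tsum_indicator_apply_singleton _ _
      (MeasurableSet.of_discrete (s := {y | e g y ∈ s}))]
    refine tsum_congr fun y => ?_
    by_cases hmem : e g y ∈ s <;>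
      simp [Set.indicator_apply, hmem]
  simp only [hpt]
  exact Measurable.ennreal_tsum fun y =>
    ((G.hpm x y).comp hk).indicator ((he y) hs)

lemma measurable_comp_lastState_aux {t : ℕ} (g : X → Hist X (JA A) t → ℝ≥0∞)
    (hg : ∀ x, Measurable (g x)) : Measurable fun h => g (L t h) h := by
  have hrep : (fun h => g (L t h) h)
      = fun h => ∑' x : X, ((L t) ⁻¹' {x}).indicator (g x) h := by
    funext h
    refine ((tsum_eq_single (f := fun x : X => ((L t) ⁻¹' {x}).indicator (g x) h)
        (L t h) fun x hx => ?_).trans ?_).symm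
    · refine Set.indicator_of_notMem (fun hmem => ?_) _
      exact hx (Set.mem_singleton_iff.mp (Set.mem_preimage.mp hmem)).symm
    · exact Set.indicator_of_mem (Set.mem_preimage.mpr (Set.mem_singleton _)) _
  rw [hrep]
  exact Measurable.ennreal_tsum fun x =>
    (hg x).indicator ((measurable_lastState X (JA A) t) (MeasurableSet.singleton x))

lemma measurable_mapKernel {t : ℕ} (x : X) (h : Hist X (JA A) t) :
    Measurable fun a : JA A =>
      (G.p x a).map fun y => (show Hist X (JA A) (t + 1) from (h, a, y)) := by
  rw [Measure.measurable_measure]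
  intro s hs
  have hmap : ∀ a : JA A,
      ((G.p x a).map fun y => (show Hist X (JA A) (t + 1) from (h, a, y))) s
        = G.p x a {y : X | (show Hist X (JA A) (t + 1) from (h, a, y)) ∈ s} := by
    intro a
    have hym : Measurable fun y : X => (show Hist X (JA A) (t + 1) from (h, a, y)) :=
      measurable_const.prodMk (measurable_const.prodMk measurable_id)
    rw [Measure.map_apply hym hs]
    rfl
  simp only [hmap]
  exact measurable_p_section G x id measurable_id hs
    (fun a y => (show Hist X (JA A) (t + 1) from (h, a, y)))
    (fun y => measurable_const.prodMk (measurable_id.prodMk measurable_const))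

/-- The one-step transition kernel on histories under a stationary profile. -/
noncomputable def stepK (φ : StatProfile G) (t : ℕ) (h : Hist X (JA A) t) :
    Measure (Hist X (JA A) (t + 1)) :=
  (Qm G φ (L t h)).bind fun a =>
    (G.p (L t h) a).map fun y => (show Hist X (JA A) (t + 1) from (h, a, y))

lemma histMeas_succ (φ : StatProfile G) (η' : Measure X) (t : ℕ) :
    histMeas G η' (ofStatAll G φ) (t + 1)
      = (histMeas G η' (ofStatAll G φ) t).bind (stepK G φ t) := rfl

lemma isProb_stepK (φ : StatProfile G) (t : ℕ) (h : Hist X (JA A) t) :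
    IsProbabilityMeasure (stepK G φ t h) := by
  constructor
  rw [stepK, Measure.bind_apply MeasurableSet.univ (measurable_mapKernel G _ h).aemeasurable]
  have h1 : ∀ a : JA A,
      ((G.p (L t h) a).map fun y => (show Hist X (JA A) (t + 1) from (h, a, y)))
        Set.univ = 1 := by
    intro a
    haveI := G.hp (L t h) a
    haveI : IsProbabilityMeasure ((G.p (L t h) a).map
        fun y => (show Hist X (JA A) (t + 1) from (h, a, y))) :=
      Measure.isProbabilityMeasure_map (measurable_const.prodMk
        (measurable_const.prodMk measurable_id)).aemeasurable
    exact measure_univ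
  simp only [h1]
  rw [lintegral_one]
  exact measure_univ

lemma measurable_stepK (φ : StatProfile G) (t : ℕ) : Measurable (stepK G φ t) := by
  rw [Measure.measurable_measure]
  intro s hs
  have hrep : ∀ h, stepK G φ t h s
      = ∫⁻ a, G.p (L t h) a
          {y : X | (show Hist X (JA A) (t + 1) from (h, a, y)) ∈ s}
          ∂(Qm G φ (L t h)) := by
    intro h
    rw [stepK, Measure.bind_apply hs (measurable_mapKernel G _ h).aemeasurable]
    refine lintegral_congr fun a => ?_
    have hym : Measurable fun y : X => (show Hist X (JA A) (t + 1) from (h, a, y)) :=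
      measurable_const.prodMk (measurable_const.prodMk measurable_id)
    rw [Measure.map_apply hym hs]
    rfl
  simp only [hrep]
  refine measurable_comp_lastState_aux
    (g := fun x h => ∫⁻ a, G.p x a
      {y : X | (show Hist X (JA A) (t + 1) from (h, a, y)) ∈ s} ∂(Qm G φ x))
    fun x => ?_
  refine Measurable.lintegral_prod_right' (f := fun q : Hist X (JA A) t × JA A =>
    G.p x q.2 {y : X | (show Hist X (JA A) (t + 1) from (q.1, q.2, y)) ∈ s}) ?_
  exact measurable_p_section G x Prod.snd measurable_snd hs
    (fun q y => (show Hist X (JA A) (t + 1) from (q.1, q.2, y)))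
    (fun y => measurable_fst.prodMk (measurable_snd.prodMk measurable_const))

lemma isProb_histMeas (φ : StatProfile G) (η' : Measure X)
    [hη' : IsProbabilityMeasure η'] (t : ℕ) :
    IsProbabilityMeasure (histMeas G η' (ofStatAll G φ) t) := by
  induction t with
  | zero => exact hη'
  | succ t ih =>
      constructor
      rw [histMeas_succ, Measure.bind_apply MeasurableSet.univ (measurable_stepK G φ t).aemeasurable]
      have h1 : ∀ h, stepK G φ t h Set.univ = 1 :=
        fun h => (isProb_stepK G φ t h).measure_univ
      simp only [h1]
      rw [lintegral_one]
      exact ih.measure_univ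

lemma histMeas_lin (φ : StatProfile G) (μ ν : Measure X) (a b : ℝ≥0∞) (t : ℕ) :
    histMeas G (a • μ + b • ν) (ofStatAll G φ) t
      = a • histMeas G μ (ofStatAll G φ) t + b • histMeas G ν (ofStatAll G φ) t := by
  induction t with
  | zero => rfl
  | succ t ih =>
      rw [histMeas_succ, histMeas_succ, histMeas_succ, ih]
      ext s hs
      rw [Measure.bind_apply hs (measurable_stepK G φ t).aemeasurable, Measure.add_apply,
        Measure.smul_apply, Measure.smul_apply,
        Measure.bind_apply hs (measurable_stepK G φ t).aemeasurable,
        Measure.bind_apply hs (measurable_stepK G φ t).aemeasurable,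
        lintegral_add_measure, lintegral_smul_measure, lintegral_smul_measure]

/-- Generic bound: `|∫ u| ≤ (∫⁻ ofReal b).toReal` for a pointwise bound `b`. -/
lemma abs_integral_le_toReal {α : Type*} [MeasurableSpace α] (ρ : Measure α)
    (u b : α → ℝ) (hub : ∀ z, |u z| ≤ b z)
    (hfin : ∫⁻ z, ENNReal.ofReal (b z) ∂ρ ≠ ⊤) :
    |∫ z, u z ∂ρ| ≤ (∫⁻ z, ENNReal.ofReal (b z) ∂ρ).toReal := by
  rw [← Real.norm_eq_abs]
  refine (norm_integral_le_lintegral_norm u).trans ?_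
  exact ENNReal.toReal_mono hfin (lintegral_mono fun z =>
    ENNReal.ofReal_le_ofReal (by simpa [Real.norm_eq_abs] using hub z))

lemma integrable_of_bound {α : Type*} [MeasurableSpace α] (ρ : Measure α)
    (u b : α → ℝ) (hu : Measurable u) (hub : ∀ z, |u z| ≤ b z)
    (hfin : ∫⁻ z, ENNReal.ofReal (b z) ∂ρ ≠ ⊤) : Integrable u ρ := by
  refine ⟨hu.aestronglyMeasurable, ?_⟩
  rw [hasFiniteIntegral_iff_norm]
  refine lt_of_le_of_lt (lintegral_mono fun z => ?_) hfin.lt_top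
  exact ENNReal.ofReal_le_ofReal (by simpa [Real.norm_eq_abs] using hub z)

lemma clamp_abs_le_abs {s c : ℝ} (hs : 0 ≤ s) : |max (-s) (min c s)| ≤ |c| := by
  rcases le_total c 0 with h | h
  · rw [min_eq_left (h.trans hs)]
    rcases le_total (-s) c with h2 | h2
    · rw [max_eq_right h2]
    · rw [max_eq_left h2, abs_of_nonpos (by linarith), abs_of_nonpos h]
      linarith
  · rcases le_total c s with h2 | h2
    · rw [min_eq_left h2, max_eq_right (by linarith)]
    · rw [min_eq_right h2, max_eq_right (by linarith), abs_of_nonneg hs,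
        abs_of_nonneg h]
      linarith

lemma clamp_sub_abs_le {s c : ℝ} (hs : 0 ≤ s) : |max (-s) (min c s) - c| ≤ |c| := by
  rcases le_total c 0 with h | h
  · rw [min_eq_left (h.trans hs)]
    rcases le_total (-s) c with h2 | h2
    · simp [max_eq_right h2]
    · rw [max_eq_left h2, abs_of_nonneg (by linarith), abs_of_nonpos h]
      linarith
  · rcases le_total c s with h2 | h2
    · rw [min_eq_left h2, max_eq_right (by linarith)]
      simp [abs_nonneg]
    · rw [min_eq_right h2, max_eq_right (by linarith), abs_of_nonpos (by linarith),
        abs_of_nonneg h]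
      linarith

lemma clamp_eq_of_abs_le {s c : ℝ} (h : |c| ≤ s) : max (-s) (min c s) = c := by
  rw [abs_le] at h
  rw [min_eq_left h.2, max_eq_right h.1]

/-- Statewise expected value under the product law of a stationary profile. -/
noncomputable def gbar (φ : StatProfile G) (f : X → JA A → ℝ) (x : X) : ℝ :=
  ∫ a, f x a ∂(Qm G φ x)

lemma stageExp_eq (φ : StatProfile G) (η' : Measure X) (f : X → JA A → ℝ) (t : ℕ) :
    stageExp G η' (ofStatAll G φ) t f
      = ∫ h, gbar G φ f (L t h) ∂(histMeas G η' (ofStatAll G φ) t) := rfl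

lemma gbar_abs_le (φ : StatProfile G) (f : X → JA A → ℝ) (x : X) (B : ℝ)
    (hf : ∀ a ∈ jointSet G x, |f x a| ≤ B) : |gbar G φ f x| ≤ B := by
  rw [gbar, ← Real.norm_eq_abs]
  have hle : ‖∫ a, f x a ∂(Qm G φ x)‖ ≤ ∫ _a, B ∂(Qm G φ x) := by
    refine norm_integral_le_of_norm_le (integrable_const B) ?_
    filter_upwards [ae_jointSet G φ x] with a ha
    simpa [Real.norm_eq_abs] using hf a ha
  simpa using hle

lemma gbar_sub_abs_le (φ : StatProfile G) (f g : X → JA A → ℝ) (x : X) (B : ℝ)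
    (hmf : Measurable (f x)) (hmg : Measurable (g x)) (Bf Bg : ℝ)
    (hbf : ∀ a ∈ jointSet G x, |f x a| ≤ Bf) (hbg : ∀ a ∈ jointSet G x, |g x a| ≤ Bg)
    (hfg : ∀ a ∈ jointSet G x, |f x a - g x a| ≤ B) :
    |gbar G φ f x - gbar G φ g x| ≤ B := by
  have hIf : Integrable (f x) (Qm G φ x) := by
    refine (integrable_const (max Bf 0)).mono' hmf.aestronglyMeasurable ?_
    filter_upwards [ae_jointSet G φ x] with a ha
    exact le_trans (by rw [Real.norm_eq_abs]; exact hbf a ha) (le_max_left _ _)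
  have hIg : Integrable (g x) (Qm G φ x) := by
    refine (integrable_const (max Bg 0)).mono' hmg.aestronglyMeasurable ?_
    filter_upwards [ae_jointSet G φ x] with a ha
    exact le_trans (by rw [Real.norm_eq_abs]; exact hbg a ha) (le_max_left _ _)
  rw [gbar, gbar, ← integral_sub hIf hIg, ← Real.norm_eq_abs]
  have hle : ‖∫ a, (f x a - g x a) ∂(Qm G φ x)‖ ≤ ∫ _a, B ∂(Qm G φ x) := by
    refine norm_integral_le_of_norm_le (integrable_const B) ?_
    filter_upwards [ae_jointSet G φ x] with a ha
    simpa [Real.norm_eq_abs] using hfg a ha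
  simpa using hle

lemma measurable_gbar_comp (φ : StatProfile G) (f : X → JA A → ℝ) (t : ℕ) :
    Measurable fun h => gbar G φ f (L t h) :=
  (Measurable.of_discrete (f := gbar G φ f)).comp (measurable_lastState X (JA A) t)

lemma integrable_gbar_const (φ : StatProfile G) (η' : Measure X)
    [IsProbabilityMeasure η'] (f : X → JA A → ℝ) (t : ℕ) (B : ℝ)
    (hf : ∀ x, ∀ a ∈ jointSet G x, |f x a| ≤ B) :
    Integrable (fun h => gbar G φ f (L t h))
      (histMeas G η' (ofStatAll G φ) t) := by
  haveI := isProb_histMeas G φ η' t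
  refine (integrable_const B).mono'
    (measurable_gbar_comp G φ f t).aestronglyMeasurable (ae_of_all _ fun h => ?_)
  simpa [Real.norm_eq_abs] using gbar_abs_le G φ f _ B (hf _)

lemma integrable_gbar_w (φ : StatProfile G) (η' : Measure X)
    (f : X → JA A → ℝ) (t : ℕ) (w : X → ℝ)
    (hf : ∀ x, ∀ a ∈ jointSet G x, |f x a| ≤ w x)
    (hfin : wStateExp G η' (ofStatAll G φ) t w ≠ ⊤) :
    Integrable (fun h => gbar G φ f (L t h))
      (histMeas G η' (ofStatAll G φ) t) := by
  refine integrable_of_bound _ _ (fun h => w (L t h))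
    (measurable_gbar_comp G φ f t) (fun h => gbar_abs_le G φ f _ _ (hf _)) hfin

lemma stage_abs_le_w (φ : StatProfile G) (η' : Measure X) (f : X → JA A → ℝ)
    (t : ℕ) (w : X → ℝ) (hf : ∀ x, ∀ a ∈ jointSet G x, |f x a| ≤ w x)
    (hfin : wStateExp G η' (ofStatAll G φ) t w ≠ ⊤) :
    |stageExp G η' (ofStatAll G φ) t f|
      ≤ (wStateExp G η' (ofStatAll G φ) t w).toReal := by
  rw [stageExp_eq]
  exact abs_integral_le_toReal _ _ (fun h => w (L t h))
    (fun h => gbar_abs_le G φ f _ _ (hf _)) hfin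

lemma stage_abs_le_const (φ : StatProfile G) (η' : Measure X)
    [IsProbabilityMeasure η'] (f : X → JA A → ℝ) (t : ℕ) (B : ℝ)
    (hB : 0 ≤ B) (hf : ∀ x, ∀ a ∈ jointSet G x, |f x a| ≤ B) :
    |stageExp G η' (ofStatAll G φ) t f| ≤ B := by
  haveI := isProb_histMeas G φ η' t
  rw [stageExp_eq]
  have hfin : ∫⁻ _h, ENNReal.ofReal B ∂(histMeas G η' (ofStatAll G φ) t) ≠ ⊤ := by
    rw [lintegral_const, measure_univ, mul_one]
    exact ENNReal.ofReal_ne_top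
  have hres := abs_integral_le_toReal (histMeas G η' (ofStatAll G φ) t)
    (fun h => gbar G φ f (L t h)) (fun _ => B)
    (fun h => gbar_abs_le G φ f _ B (hf _)) hfin
  rwa [lintegral_const, measure_univ, mul_one, ENNReal.toReal_ofReal hB] at hres

lemma measurableSet_wSet (t : ℕ) (w : X → ℝ) (r : ℝ) :
    MeasurableSet {h : Hist X (JA A) t | r ≤ w (L t h)} :=
  (measurable_lastState X (JA A) t) (MeasurableSet.of_discrete (s := {x : X | r ≤ w x}))

lemma lintegral_ind_eq (φ : StatProfile G) (η' : Measure X) (t : ℕ) (k : ℕ)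
    (w : X → ℝ) :
    ∫⁻ h, ENNReal.ofReal (if (k : ℝ) ≤ w (L t h) then w (L t h) else 0)
        ∂(histMeas G η' (ofStatAll G φ) t)
      = ∫⁻ h in {h | (k : ℝ) ≤ w (L t h)}, ENNReal.ofReal (w (L t h))
          ∂(histMeas G η' (ofStatAll G φ) t) := by
  rw [← lintegral_indicator (measurableSet_wSet t w (k : ℝ)) _]
  refine lintegral_congr fun h => ?_
  by_cases hk : (k : ℝ) ≤ w (L t h) <;>
    simp [Set.indicator_apply, hk]

lemma wStateExp_le_U_add (φ : StatProfile G) (t : ℕ) (k : ℕ) (w : X → ℝ) :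
    wStateExp G G.η (ofStatAll G φ) t w
      ≤ (∫⁻ h in {h | (k : ℝ) ≤ w (L t h)}, ENNReal.ofReal (w (L t h))
          ∂(histMeas G G.η (ofStatAll G φ) t)) + k := by
  haveI := G.hη
  haveI := isProb_histMeas G φ G.η t
  have hS : MeasurableSet {h : Hist X (JA A) t | (k : ℝ) ≤ w (L t h)} :=
    measurableSet_wSet t w (k : ℝ)
  have hdec := lintegral_add_compl
    (fun h => ENNReal.ofReal (w (L t h))) hS
    (μ := histMeas G G.η (ofStatAll G φ) t)
  rw [show wStateExp G G.η (ofStatAll G φ) t w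
    = ∫⁻ h, ENNReal.ofReal (w (L t h)) ∂(histMeas G G.η (ofStatAll G φ) t) from rfl,
    ← hdec]
  refine add_le_add le_rfl ?_
  calc ∫⁻ h in {h | (k : ℝ) ≤ w (L t h)}ᶜ, ENNReal.ofReal (w (L t h))
        ∂(histMeas G G.η (ofStatAll G φ) t)
      ≤ ∫⁻ _h in {h | (k : ℝ) ≤ w (L t h)}ᶜ, (k : ℝ≥0∞)
        ∂(histMeas G G.η (ofStatAll G φ) t) := by
        refine setLIntegral_mono' hS.compl fun h hh => ?_
        have : w (L t h) < (k : ℝ) := not_le.mp hh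
        calc ENNReal.ofReal (w (L t h)) ≤ ENNReal.ofReal (k : ℝ) :=
              ENNReal.ofReal_le_ofReal this.le
          _ = (k : ℝ≥0∞) := ENNReal.ofReal_natCast k
    _ ≤ (k : ℝ≥0∞) := by
        rw [setLIntegral_const]
        exact le_trans (mul_le_mul_right (measure_mono (Set.subset_univ _)) _)
          (by rw [measure_univ, mul_one])

lemma stage_sub_abs_le (φ : StatProfile G) (f g : X → JA A → ℝ) (t : ℕ)
    (w D : X → ℝ)
    (hmf : ∀ x, Measurable (f x)) (hmg : ∀ x, Measurable (g x))
    (hbf : ∀ x, ∀ a ∈ jointSet G x, |f x a| ≤ w x)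
    (hbg : ∀ x, ∀ a ∈ jointSet G x, |g x a| ≤ w x)
    (hfg : ∀ x, ∀ a ∈ jointSet G x, |f x a - g x a| ≤ D x)
    (hfinw : wStateExp G G.η (ofStatAll G φ) t w ≠ ⊤)
    (hfinD : ∫⁻ h, ENNReal.ofReal (D (L t h))
        ∂(histMeas G G.η (ofStatAll G φ) t) ≠ ⊤) :
    |stageExp G G.η (ofStatAll G φ) t f - stageExp G G.η (ofStatAll G φ) t g|
      ≤ (∫⁻ h, ENNReal.ofReal (D (L t h))
          ∂(histMeas G G.η (ofStatAll G φ) t)).toReal := by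
  have hIf := integrable_gbar_w G φ G.η f t w hbf hfinw
  have hIg := integrable_gbar_w G φ G.η g t w hbg hfinw
  rw [stageExp_eq, stageExp_eq, ← integral_sub hIf hIg]
  refine abs_integral_le_toReal _ _ (fun h => D (L t h)) (fun h => ?_) hfinD
  exact gbar_sub_abs_le G φ f g (L t h) _ (hmf _) (hmg _) (w (L t h)) (w (L t h))
    (hbf _) (hbg _) (hfg _)

lemma tsum_abs_head_tail (f : ℕ → ℝ) (hf : Summable f) (K : ℕ) :
    |∑' t, f t| ≤ (∑ t ∈ Finset.range K, |f t|) + ∑' t, |f (t + K)| := by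
  have habs : Summable fun t => |f t| := summable_abs_iff.mpr hf
  have h1 : ‖∑' t, f t‖ ≤ ∑' t, ‖f t‖ :=
    norm_tsum_le_tsum_norm (f := f) (by simpa [Real.norm_eq_abs] using habs)
  simp only [Real.norm_eq_abs] at h1
  rw [← Summable.sum_add_tsum_nat_add K habs] at h1
  exact h1

end Stmt14Aux
set_option maxHeartbeats 2000000 in
/-- Lemma 7(a). -/
theorem stmt14 (w : X → ℝ) (hA : AssumptionA G) (hB : AssumptionB G w)
    (ηt : Measure X) (hηt : IsPerturb G ηt) (i : Fin n) (ℓ : Fin (l + 1)) :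
    ∀ ε : ℝ, 0 < ε → ∃ M : ℕ, ∀ m : ℕ, M ≤ m → ∀ φ : StatProfile G,
      |Jm G ηt m i ℓ (ofStatAll G φ) - J G i ℓ (ofStatAll G φ)| ≤ ε := by
  classical
  obtain ⟨hw1, hcw, htail, hUI⟩ := hB
  intro ε hε
  have hα0 := G.hα0
  have hα1 := G.hα1
  have hαnn : (0:ℝ) ≤ G.α := hα0.le
  have h1α : (0:ℝ) < 1 - G.α := by linarith
  -- tail cutoff
  set δ : ℝ := min 1 (ε/8) with hδdef
  have hδpos : 0 < δ := lt_min one_pos (by positivity)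
  have hδ1 : δ ≤ 1 := min_le_left _ _
  have hδε : δ ≤ ε/8 := min_le_right _ _
  obtain ⟨K, hK⟩ := (htail.eventually_lt_const (ENNReal.ofReal_pos.mpr hδpos)).exists
  -- uniform integrability cutoffs
  set δ' : ℝ := min 1 (ε/(8*(K+1))) with hδ'def
  have hδ'pos : 0 < δ' := lt_min one_pos (by positivity)
  have hδ'1 : δ' ≤ 1 := min_le_left _ _
  have hδ'ε : δ' ≤ ε/(8*(K+1)) := min_le_right _ _
  have hUIc : ∀ t : ℕ, ∃ Dt : ℕ, ∀ k, Dt ≤ k →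
      (⨆ π : MultiStrategy G, ∫⁻ h in {h | (k:ℝ) ≤ w (lastState X (JA A) t h)},
        ENNReal.ofReal (w (lastState X (JA A) t h)) ∂(histMeas G G.η π t))
        < ENNReal.ofReal δ' :=
    fun t => eventually_atTop.mp
      ((hUI t).eventually_lt_const (ENNReal.ofReal_pos.mpr hδ'pos))
  choose D hD using hUIc
  set CJ : ℝ := (∑ t ∈ Finset.range K, ((D t : ℝ) + 1)) + 1 with hCJdef
  have hCJnn : 0 ≤ CJ := by positivity
  set kstar : ℕ := (Finset.range K).sup D with hkstardef
  refine ⟨max (max (kstar^2) ⌈(8/ε)^2⌉₊) (max ⌈8*CJ/ε⌉₊ 1), fun m hm φ => ?_⟩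
  -- arithmetic consequences of `M ≤ m`
  have hm1 : 1 ≤ m :=
    le_trans (le_trans (le_max_right ⌈8*CJ/ε⌉₊ 1) (le_max_right _ _)) hm
  have hmR1 : (1:ℝ) ≤ (m:ℝ) := by exact_mod_cast hm1
  have hmRpos : (0:ℝ) < m := by linarith
  have hks2 : kstar^2 ≤ m := le_trans (le_trans (le_max_left _ _) (le_max_left _ _)) hm
  have hceil1 : ⌈(8/ε)^2⌉₊ ≤ m :=
    le_trans (le_trans (le_max_right _ _) (le_max_left _ _)) hm
  have hceil2 : ⌈8*CJ/ε⌉₊ ≤ m :=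
    le_trans (le_trans (le_max_left _ _) (le_max_right _ _)) hm
  have hsqnn : (0:ℝ) ≤ Real.sqrt m := Real.sqrt_nonneg _
  have hks : (kstar:ℝ) ≤ Real.sqrt m := by
    have h1 : ((kstar:ℝ))^2 ≤ (m:ℝ) := by exact_mod_cast hks2
    have h2 := Real.sqrt_le_sqrt h1
    rwa [Real.sqrt_sq (Nat.cast_nonneg _)] at h2
  have h8ε : (0:ℝ) < 8/ε := by positivity
  have hsm : 8/ε ≤ Real.sqrt m := by
    have h1 : ((8/ε)^2 : ℝ) ≤ (m:ℝ) := le_trans (Nat.le_ceil _) (by exact_mod_cast hceil1)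
    have h2 := Real.sqrt_le_sqrt h1
    rwa [Real.sqrt_sq h8ε.le] at h2
  have hsqpos : 0 < Real.sqrt m := lt_of_lt_of_le h8ε hsm
  have hinvsqrt : 1/Real.sqrt m ≤ ε/8 := by
    calc 1/Real.sqrt m ≤ 1/(8/ε) := one_div_le_one_div_of_le h8ε hsm
      _ = ε/8 := by field_simp
  have hCJm : CJ/m ≤ ε/8 := by
    have h1 : (8*CJ/ε : ℝ) ≤ (m:ℝ) := le_trans (Nat.le_ceil _) (by exact_mod_cast hceil2)
    have h2 : 8*CJ ≤ (m:ℝ) * ε := (div_le_iff₀ hε).mp h1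
    rw [div_le_div_iff₀ hmRpos (by norm_num : (0:ℝ) < 8)]
    linarith
  have hcoef1 : (0:ℝ) ≤ 1 - 1/m := by
    have : 1/(m:ℝ) ≤ 1 := by rw [div_le_one hmRpos]; exact hmR1
    linarith
  have hcoef2 : (0:ℝ) ≤ 1/m := by positivity
  -- instances
  haveI := G.hη
  haveI := hηt.1
  -- per-stage weighted quantities for the fixed profile φ
  have hUsup : ∀ t k : ℕ,
      (∫⁻ h in {h | (k:ℝ) ≤ w (lastState X (JA A) t h)},
        ENNReal.ofReal (w (lastState X (JA A) t h))
        ∂(histMeas G G.η (ofStatAll G φ) t))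
      ≤ ⨆ π : MultiStrategy G, ∫⁻ h in {h | (k:ℝ) ≤ w (lastState X (JA A) t h)},
        ENNReal.ofReal (w (lastState X (JA A) t h)) ∂(histMeas G G.η π t) :=
    fun t k => le_iSup (fun π : MultiStrategy G =>
      ∫⁻ h in {h | (k:ℝ) ≤ w (lastState X (JA A) t h)},
        ENNReal.ofReal (w (lastState X (JA A) t h)) ∂(histMeas G G.η π t))
      (ofStatAll G φ)
  have hUD : ∀ t k : ℕ, D t ≤ k →
      (∫⁻ h in {h | (k:ℝ) ≤ w (lastState X (JA A) t h)},
        ENNReal.ofReal (w (lastState X (JA A) t h))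
        ∂(histMeas G G.η (ofStatAll G φ) t)) < ENNReal.ofReal δ' :=
    fun t k hk => lt_of_le_of_lt (hUsup t k) (hD t k hk)
  have hWfin : ∀ t, wStateExp G G.η (ofStatAll G φ) t w ≠ ⊤ := by
    intro t
    refine ne_top_of_le_ne_top ?_ (wStateExp_le_U_add G φ t (D t) w)
    exact ENNReal.add_ne_top.mpr
      ⟨(lt_of_lt_of_le (hUD t (D t) le_rfl) le_top).ne, ENNReal.natCast_ne_top _⟩
  have hWnn : ∀ t, 0 ≤ (wStateExp G G.η (ofStatAll G φ) t w).toReal :=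
    fun t => ENNReal.toReal_nonneg
  have hWtoReal : ∀ t, (wStateExp G G.η (ofStatAll G φ) t w).toReal ≤ (D t : ℝ) + 1 := by
    intro t
    refine ENNReal.toReal_le_of_le_ofReal (by positivity) ?_
    refine le_trans (wStateExp_le_U_add G φ t (D t) w) ?_
    have h1 : (∫⁻ h in {h | ((D t : ℕ):ℝ) ≤ w (lastState X (JA A) t h)},
        ENNReal.ofReal (w (lastState X (JA A) t h))
        ∂(histMeas G G.η (ofStatAll G φ) t)) ≤ 1 := by
      refine le_trans (hUD t (D t) le_rfl).le ?_
      calc ENNReal.ofReal δ' ≤ ENNReal.ofReal 1 := ENNReal.ofReal_le_ofReal hδ'1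
        _ = 1 := ENNReal.ofReal_one
    rw [ENNReal.ofReal_add (Nat.cast_nonneg _) zero_le_one, ENNReal.ofReal_natCast,
      ENNReal.ofReal_one, add_comm ((D t : ℕ) : ℝ≥0∞) 1]
    exact add_le_add h1 le_rfl
  -- the tail bound for the fixed profile
  have hTK : ENNReal.ofReal (1 - G.α) * ∑' t : ℕ, ENNReal.ofReal G.α ^ (K + t) *
      wStateExp G G.η (ofStatAll G φ) (K + t) w < ENNReal.ofReal δ :=
    lt_of_le_of_lt (le_iSup (fun π : MultiStrategy G => ENNReal.ofReal (1 - G.α) *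
      ∑' t : ℕ, ENNReal.ofReal G.α ^ (K + t) * wStateExp G G.η π (K + t) w)
      (ofStatAll G φ)) hK
  have htermfin : ∀ t, ENNReal.ofReal G.α ^ (K + t) *
      wStateExp G G.η (ofStatAll G φ) (K + t) w ≠ ⊤ :=
    fun t => ENNReal.mul_ne_top (ENNReal.pow_ne_top ENNReal.ofReal_ne_top) (hWfin _)
  have hsumfin : (∑' t : ℕ, ENNReal.ofReal G.α ^ (K + t) *
      wStateExp G G.η (ofStatAll G φ) (K + t) w) ≠ ⊤ := by
    intro hc
    rw [hc, ENNReal.mul_top (ENNReal.ofReal_pos.mpr h1α).ne'] at hTK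
    exact not_top_lt hTK
  have htermReal : ∀ t, (ENNReal.ofReal G.α ^ (K + t) *
      wStateExp G G.η (ofStatAll G φ) (K + t) w).toReal
      = G.α ^ (K + t) * (wStateExp G G.η (ofStatAll G φ) (K + t) w).toReal := by
    intro t
    rw [ENNReal.toReal_mul, ENNReal.toReal_pow, ENNReal.toReal_ofReal hαnn]
  have htailReal : (1 - G.α) * ∑' t : ℕ, G.α ^ (K + t) *
      (wStateExp G G.η (ofStatAll G φ) (K + t) w).toReal
      = (ENNReal.ofReal (1 - G.α) * ∑' t : ℕ, ENNReal.ofReal G.α ^ (K + t) *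
        wStateExp G G.η (ofStatAll G φ) (K + t) w).toReal := by
    rw [ENNReal.toReal_mul, ENNReal.toReal_ofReal h1α.le,
      ENNReal.tsum_toReal_eq htermfin]
    exact congrArg _ (tsum_congr fun t => (htermReal t).symm)
  have htaille : (1 - G.α) * ∑' t : ℕ, G.α ^ (K + t) *
      (wStateExp G G.η (ofStatAll G φ) (K + t) w).toReal ≤ δ := by
    rw [htailReal]
    exact ENNReal.toReal_le_of_le_ofReal hδpos.le hTK.le
  have htailnn : ∀ t : ℕ, 0 ≤ G.α ^ (K + t) *
      (wStateExp G G.η (ofStatAll G φ) (K + t) w).toReal :=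
    fun t => mul_nonneg (pow_nonneg hαnn _) (hWnn _)
  -- summability of the weight series
  have hsumWtail : Summable (fun t => G.α ^ (K + t) *
      (wStateExp G G.η (ofStatAll G φ) (K + t) w).toReal) :=
    (ENNReal.summable_toReal hsumfin).congr htermReal
  have hsumW : Summable (fun t : ℕ => G.α ^ t *
      (wStateExp G G.η (ofStatAll G φ) t w).toReal) := by
    refine (summable_nat_add_iff K).mp ?_
    simpa [add_comm] using hsumWtail
    -- pointwise cost bounds
  have hwnn : ∀ x, (0:ℝ) ≤ w x := fun x => le_trans zero_le_one (hw1 x)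
  have hcb : ∀ x, ∀ a ∈ jointSet G x, |G.c i ℓ x a| ≤ w x := fun x a ha => hcw i ℓ x a ha
  have hctrunc_eq : ∀ x a, ctrunc G i ℓ m x a
      = max (-Real.sqrt m) (min (G.c i ℓ x a) (Real.sqrt m)) := fun _ _ => rfl
  have hctb : ∀ x, ∀ a ∈ jointSet G x, |ctrunc G i ℓ m x a| ≤ w x := by
    intro x a ha
    rw [hctrunc_eq]
    exact le_trans (clamp_abs_le_abs hsqnn) (hcb x a ha)
  have hctconst : ∀ x, ∀ a ∈ jointSet G x, |ctrunc G i ℓ m x a| ≤ Real.sqrt m := by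
    intro x a _ha
    rw [hctrunc_eq, abs_le]
    exact ⟨le_max_left _ _, max_le (by linarith) (min_le_right _ _)⟩
  have hDfun : ∀ x, ∀ a ∈ jointSet G x, |ctrunc G i ℓ m x a - G.c i ℓ x a|
      ≤ (if (kstar:ℝ) ≤ w x then w x else 0) := by
    intro x a ha
    by_cases hx : (kstar:ℝ) ≤ w x
    · rw [if_pos hx, hctrunc_eq]
      exact le_trans (clamp_sub_abs_le hsqnn) (hcb x a ha)
    · rw [if_neg hx, hctrunc_eq,
        clamp_eq_of_abs_le (le_trans (hcb x a ha) (le_trans (not_le.mp hx).le hks)),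
        sub_self, abs_zero]
  have hmct : ∀ x, Measurable (ctrunc G i ℓ m x) := fun x =>
    measurable_const.max ((G.hc i ℓ x).min measurable_const)
  have hmc : ∀ x, Measurable (G.c i ℓ x) := G.hc i ℓ
  -- per-stage bounds
  have hB1 : ∀ t, |stageExp G G.η (ofStatAll G φ) t (G.c i ℓ)|
      ≤ (wStateExp G G.η (ofStatAll G φ) t w).toReal :=
    fun t => stage_abs_le_w G φ G.η (G.c i ℓ) t w hcb (hWfin t)
  have hB2 : ∀ t, |stageExp G G.η (ofStatAll G φ) t (ctrunc G i ℓ m)|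
      ≤ (wStateExp G G.η (ofStatAll G φ) t w).toReal :=
    fun t => stage_abs_le_w G φ G.η _ t w hctb (hWfin t)
  have hB4 : ∀ t, |stageExp G ηt (ofStatAll G φ) t (ctrunc G i ℓ m)| ≤ Real.sqrt m :=
    fun t => stage_abs_le_const G φ ηt _ t (Real.sqrt m) hsqnn hctconst
  have hUfin : ∀ t, (∫⁻ h in {h | (kstar:ℝ) ≤ w (lastState X (JA A) t h)},
      ENNReal.ofReal (w (lastState X (JA A) t h))
      ∂(histMeas G G.η (ofStatAll G φ) t)) ≠ ⊤ :=
    fun t => ne_top_of_le_ne_top (hWfin t) (setLIntegral_le_lintegral _ _)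
  have hB3 : ∀ t, |stageExp G G.η (ofStatAll G φ) t (ctrunc G i ℓ m)
        - stageExp G G.η (ofStatAll G φ) t (G.c i ℓ)|
      ≤ (∫⁻ h in {h | (kstar:ℝ) ≤ w (lastState X (JA A) t h)},
        ENNReal.ofReal (w (lastState X (JA A) t h))
        ∂(histMeas G G.η (ofStatAll G φ) t)).toReal := by
    intro t
    have hfinD : ∫⁻ h, ENNReal.ofReal
        ((fun x => if (kstar:ℝ) ≤ w x then w x else 0) (lastState X (JA A) t h))
        ∂(histMeas G G.η (ofStatAll G φ) t) ≠ ⊤ := by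
      rw [lintegral_ind_eq G φ G.η t kstar w]
      exact hUfin t
    have h0 := stage_sub_abs_le G φ (ctrunc G i ℓ m) (G.c i ℓ) t w
      (fun x => if (kstar:ℝ) ≤ w x then w x else 0) hmct hmc hctb hcb hDfun
      (hWfin t) hfinD
    rwa [lintegral_ind_eq G φ G.η t kstar w] at h0
  have hUbound : ∀ t, t < K →
      (∫⁻ h in {h | (kstar:ℝ) ≤ w (lastState X (JA A) t h)},
        ENNReal.ofReal (w (lastState X (JA A) t h))
        ∂(histMeas G G.η (ofStatAll G φ) t)).toReal ≤ δ' := by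
    intro t ht
    refine ENNReal.toReal_le_of_le_ofReal hδ'pos.le ?_
    exact (hUD t kstar (Finset.le_sup (Finset.mem_range.mpr ht))).le
  -- summability of the stage series
  have hαpow : ∀ t : ℕ, (0:ℝ) ≤ G.α ^ t := fun t => pow_nonneg hαnn t
  have hsumR : Summable (fun t => G.α ^ t * stageExp G G.η (ofStatAll G φ) t (G.c i ℓ)) := by
    refine Summable.of_norm_bounded hsumW fun t => ?_
    rw [Real.norm_eq_abs, abs_mul, abs_of_nonneg (hαpow t)]
    exact mul_le_mul_of_nonneg_left (hB1 t) (hαpow t)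
  have hsumT : Summable (fun t => G.α ^ t *
      stageExp G G.η (ofStatAll G φ) t (ctrunc G i ℓ m)) := by
    refine Summable.of_norm_bounded hsumW fun t => ?_
    rw [Real.norm_eq_abs, abs_mul, abs_of_nonneg (hαpow t)]
    exact mul_le_mul_of_nonneg_left (hB2 t) (hαpow t)
  have hgeom : Summable (fun t : ℕ => G.α ^ t) := summable_geometric_of_lt_one hαnn hα1
  have hsumU : Summable (fun t => G.α ^ t *
      stageExp G ηt (ofStatAll G φ) t (ctrunc G i ℓ m)) := by
    refine Summable.of_norm_bounded (hgeom.mul_right (Real.sqrt m)) fun t => ?_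
    rw [Real.norm_eq_abs, abs_mul, abs_of_nonneg (hαpow t)]
    exact mul_le_mul_of_nonneg_left (hB4 t) (hαpow t)
    -- J as a series
  have hJeq : J G i ℓ (ofStatAll G φ) = (1 - G.α) * ∑' t : ℕ, G.α ^ t *
      stageExp G G.η (ofStatAll G φ) t (G.c i ℓ) := rfl
  -- splitting of Jm along the perturbed initial distribution
  have hstagesplit : ∀ t, stageExp G (etam G ηt m) (ofStatAll G φ) t (ctrunc G i ℓ m)
      = (1 - 1/m) * stageExp G G.η (ofStatAll G φ) t (ctrunc G i ℓ m)
        + (1/m) * stageExp G ηt (ofStatAll G φ) t (ctrunc G i ℓ m) := by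
    intro t
    have hIη : Integrable (fun h => gbar G φ (ctrunc G i ℓ m) (lastState X (JA A) t h))
        (histMeas G G.η (ofStatAll G φ) t) :=
      integrable_gbar_const G φ G.η _ t (Real.sqrt m) hctconst
    have hIηt : Integrable (fun h => gbar G φ (ctrunc G i ℓ m) (lastState X (JA A) t h))
        (histMeas G ηt (ofStatAll G φ) t) :=
      integrable_gbar_const G φ ηt _ t (Real.sqrt m) hctconst
    have hhm : histMeas G (etam G ηt m) (ofStatAll G φ) t
        = ENNReal.ofReal (1 - 1/(m:ℝ)) • histMeas G G.η (ofStatAll G φ) t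
          + ENNReal.ofReal (1/(m:ℝ)) • histMeas G ηt (ofStatAll G φ) t := by
      rw [show etam G ηt m
        = ENNReal.ofReal (1 - 1/(m:ℝ)) • G.η + ENNReal.ofReal (1/(m:ℝ)) • ηt from rfl]
      exact histMeas_lin G φ G.η ηt _ _ t
    rw [stageExp_eq, stageExp_eq, stageExp_eq, hhm,
      integral_add_measure (hIη.smul_measure ENNReal.ofReal_ne_top)
        (hIηt.smul_measure ENNReal.ofReal_ne_top),
      integral_smul_measure, integral_smul_measure,
      ENNReal.toReal_ofReal hcoef1, ENNReal.toReal_ofReal hcoef2]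
    simp [smul_eq_mul]
  have hJm : Jm G ηt m i ℓ (ofStatAll G φ)
      = (1 - 1/m) * ((1 - G.α) * ∑' t : ℕ, G.α ^ t *
          stageExp G G.η (ofStatAll G φ) t (ctrunc G i ℓ m))
        + (1/m) * ((1 - G.α) * ∑' t : ℕ, G.α ^ t *
          stageExp G ηt (ofStatAll G φ) t (ctrunc G i ℓ m)) := by
    rw [show Jm G ηt m i ℓ (ofStatAll G φ) = (1 - G.α) * ∑' t : ℕ, G.α ^ t *
      stageExp G (etam G ηt m) (ofStatAll G φ) t (ctrunc G i ℓ m) from rfl]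
    have h1 : ∀ t : ℕ, G.α ^ t * stageExp G (etam G ηt m) (ofStatAll G φ) t (ctrunc G i ℓ m)
        = (1 - 1/m) * (G.α ^ t * stageExp G G.η (ofStatAll G φ) t (ctrunc G i ℓ m))
          + (1/m) * (G.α ^ t * stageExp G ηt (ofStatAll G φ) t (ctrunc G i ℓ m)) := by
      intro t
      rw [hstagesplit t]
      ring
    rw [tsum_congr h1, Summable.tsum_add (hsumT.mul_left _) (hsumU.mul_left _),
      tsum_mul_left, tsum_mul_left]
    ring
  -- bound on the truncated series with initial distribution ηt
  have hBb : |(1 - G.α) * ∑' t : ℕ, G.α ^ t *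
      stageExp G ηt (ofStatAll G φ) t (ctrunc G i ℓ m)| ≤ Real.sqrt m := by
    rw [abs_mul, abs_of_nonneg h1α.le]
    have h1 : |∑' t : ℕ, G.α ^ t * stageExp G ηt (ofStatAll G φ) t (ctrunc G i ℓ m)|
        ≤ ∑' t : ℕ, G.α ^ t * Real.sqrt m := by
      have h2 : ∀ t : ℕ, |G.α ^ t * stageExp G ηt (ofStatAll G φ) t (ctrunc G i ℓ m)|
          ≤ G.α ^ t * Real.sqrt m := fun t => by
        rw [abs_mul, abs_of_nonneg (hαpow t)]
        exact mul_le_mul_of_nonneg_left (hB4 t) (hαpow t)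
      calc |∑' t : ℕ, G.α ^ t * stageExp G ηt (ofStatAll G φ) t (ctrunc G i ℓ m)|
          ≤ ∑' t : ℕ, |G.α ^ t * stageExp G ηt (ofStatAll G φ) t (ctrunc G i ℓ m)| := by
            have := norm_tsum_le_tsum_norm (f := fun t : ℕ => G.α ^ t *
              stageExp G ηt (ofStatAll G φ) t (ctrunc G i ℓ m))
              (by simp only [Real.norm_eq_abs]; exact summable_abs_iff.mpr hsumU)
            simp only [Real.norm_eq_abs] at this
            exact this
        _ ≤ ∑' t : ℕ, G.α ^ t * Real.sqrt m :=
            Summable.tsum_le_tsum h2 (summable_abs_iff.mpr hsumU) (hgeom.mul_right _)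
    have h3 : (∑' t : ℕ, G.α ^ t * Real.sqrt m) = (1 - G.α)⁻¹ * Real.sqrt m := by
      rw [tsum_mul_right, tsum_geometric_of_lt_one hαnn hα1]
    calc (1 - G.α) * |∑' t : ℕ, G.α ^ t * stageExp G ηt (ofStatAll G φ) t (ctrunc G i ℓ m)|
        ≤ (1 - G.α) * ((1 - G.α)⁻¹ * Real.sqrt m) := by
          rw [← h3]
          exact mul_le_mul_of_nonneg_left h1 h1α.le
      _ = Real.sqrt m := by
          rw [← mul_assoc, mul_inv_cancel₀ h1α.ne', one_mul]
    -- head+tail estimate for the truncation error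
  have hAJ : |(1 - G.α) * ∑' t : ℕ, G.α ^ t *
        stageExp G G.η (ofStatAll G φ) t (ctrunc G i ℓ m)
      - (1 - G.α) * ∑' t : ℕ, G.α ^ t *
        stageExp G G.η (ofStatAll G φ) t (G.c i ℓ)| ≤ ε/8 + ε/4 := by
    rw [← mul_sub, ← Summable.tsum_sub hsumT hsumR, abs_mul, abs_of_nonneg h1α.le]
    have hsumd : Summable (fun t : ℕ =>
        G.α ^ t * stageExp G G.η (ofStatAll G φ) t (ctrunc G i ℓ m)
        - G.α ^ t * stageExp G G.η (ofStatAll G φ) t (G.c i ℓ)) := hsumT.sub hsumR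
    have hht := tsum_abs_head_tail _ hsumd K
    have hdabs : ∀ t : ℕ, |G.α ^ t * stageExp G G.η (ofStatAll G φ) t (ctrunc G i ℓ m)
        - G.α ^ t * stageExp G G.η (ofStatAll G φ) t (G.c i ℓ)|
        = G.α ^ t * |stageExp G G.η (ofStatAll G φ) t (ctrunc G i ℓ m)
          - stageExp G G.η (ofStatAll G φ) t (G.c i ℓ)| := by
      intro t
      rw [← mul_sub, abs_mul, abs_of_nonneg (hαpow t)]
    -- head bound
    have hhead : (∑ t ∈ Finset.range K,
        |G.α ^ t * stageExp G G.η (ofStatAll G φ) t (ctrunc G i ℓ m)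
          - G.α ^ t * stageExp G G.η (ofStatAll G φ) t (G.c i ℓ)|) ≤ K * δ' := by
      rw [show ((K:ℝ) * δ') = ∑ _t ∈ Finset.range K, δ' by
        rw [Finset.sum_const, Finset.card_range, nsmul_eq_mul]]
      refine Finset.sum_le_sum fun t ht => ?_
      rw [hdabs t]
      calc G.α ^ t * |stageExp G G.η (ofStatAll G φ) t (ctrunc G i ℓ m)
            - stageExp G G.η (ofStatAll G φ) t (G.c i ℓ)|
          ≤ 1 * ((∫⁻ h in {h | (kstar:ℝ) ≤ w (lastState X (JA A) t h)},
            ENNReal.ofReal (w (lastState X (JA A) t h))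
            ∂(histMeas G G.η (ofStatAll G φ) t)).toReal) := by
            refine mul_le_mul (pow_le_one₀ hαnn hα1.le) (hB3 t) (abs_nonneg _) one_pos.le
        _ ≤ δ' := by
            rw [one_mul]
            exact hUbound t (Finset.mem_range.mp ht)
    -- tail bound
    have htail2 : (∑' t : ℕ,
        |G.α ^ (t + K) * stageExp G G.η (ofStatAll G φ) (t + K) (ctrunc G i ℓ m)
          - G.α ^ (t + K) * stageExp G G.η (ofStatAll G φ) (t + K) (G.c i ℓ)|)
        ≤ ∑' t : ℕ, 2 * (G.α ^ (K + t) *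
          (wStateExp G G.η (ofStatAll G φ) (K + t) w).toReal) := by
      refine Summable.tsum_le_tsum (fun t => ?_)
        ((summable_nat_add_iff K).mpr (summable_abs_iff.mpr hsumd))
        (hsumWtail.mul_left 2)
      rw [hdabs (t + K), add_comm t K]
      calc G.α ^ (K + t) * |stageExp G G.η (ofStatAll G φ) (K + t) (ctrunc G i ℓ m)
            - stageExp G G.η (ofStatAll G φ) (K + t) (G.c i ℓ)|
          ≤ G.α ^ (K + t) * (2 * (wStateExp G G.η (ofStatAll G φ) (K + t) w).toReal) := by
            refine mul_le_mul_of_nonneg_left ?_ (hαpow _)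
            calc |stageExp G G.η (ofStatAll G φ) (K + t) (ctrunc G i ℓ m)
                  - stageExp G G.η (ofStatAll G φ) (K + t) (G.c i ℓ)|
                ≤ |stageExp G G.η (ofStatAll G φ) (K + t) (ctrunc G i ℓ m)|
                  + |stageExp G G.η (ofStatAll G φ) (K + t) (G.c i ℓ)| := abs_sub _ _
              _ ≤ 2 * (wStateExp G G.η (ofStatAll G φ) (K + t) w).toReal := by
                  have := hB2 (K + t)
                  have := hB1 (K + t)
                  linarith
        _ = 2 * (G.α ^ (K + t) *
            (wStateExp G G.η (ofStatAll G φ) (K + t) w).toReal) := by ring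
    have hKδ' : (K:ℝ) * δ' ≤ ε/8 := by
      have h1 : (K:ℝ) * δ' ≤ (K:ℝ) * (ε/(8*(K+1))) :=
        mul_le_mul_of_nonneg_left hδ'ε (Nat.cast_nonneg K)
      have h2 : (K:ℝ) * (ε/(8*(K+1))) ≤ ε/8 := by
        rw [mul_div_assoc', div_le_div_iff₀ (by positivity) (by norm_num : (0:ℝ) < 8)]
        have hKc : (0:ℝ) ≤ (K:ℝ) := Nat.cast_nonneg K
        nlinarith [hε.le]
      linarith
    have htailfin : (∑' t : ℕ, 2 * (G.α ^ (K + t) *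
        (wStateExp G G.η (ofStatAll G φ) (K + t) w).toReal)) = 2 * ∑' t : ℕ,
        G.α ^ (K + t) * (wStateExp G G.η (ofStatAll G φ) (K + t) w).toReal :=
      tsum_mul_left
    calc (1 - G.α) * |∑' t : ℕ,
          (G.α ^ t * stageExp G G.η (ofStatAll G φ) t (ctrunc G i ℓ m)
          - G.α ^ t * stageExp G G.η (ofStatAll G φ) t (G.c i ℓ))|
        ≤ (1 - G.α) * (((K:ℝ) * δ') + 2 * ∑' t : ℕ,
            G.α ^ (K + t) * (wStateExp G G.η (ofStatAll G φ) (K + t) w).toReal) := by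
          refine mul_le_mul_of_nonneg_left ?_ h1α.le
          refine le_trans hht ?_
          rw [← htailfin]
          exact add_le_add hhead htail2
      _ ≤ 1 * ((K:ℝ) * δ') + 2 * ((1 - G.α) * ∑' t : ℕ,
            G.α ^ (K + t) * (wStateExp G G.η (ofStatAll G φ) (K + t) w).toReal) := by
          have hsumnn : (0:ℝ) ≤ ∑' t : ℕ,
              G.α ^ (K + t) * (wStateExp G G.η (ofStatAll G φ) (K + t) w).toReal :=
            tsum_nonneg htailnn
          have hKδ'nn : (0:ℝ) ≤ (K:ℝ) * δ' :=
            mul_nonneg (Nat.cast_nonneg K) hδ'pos.le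
          nlinarith [h1α, hα0]
      _ ≤ ε/8 + ε/4 := by
          rw [one_mul]
          have h2δ : 2 * ((1 - G.α) * ∑' t : ℕ,
              G.α ^ (K + t) * (wStateExp G G.η (ofStatAll G φ) (K + t) w).toReal)
              ≤ 2 * δ := by linarith [htaille]
          linarith [hδε]
  -- uniform bound on |J|
  have hJb : |J G i ℓ (ofStatAll G φ)| ≤ CJ := by
    rw [hJeq, abs_mul, abs_of_nonneg h1α.le]
    have hht := tsum_abs_head_tail _ hsumR K
    have hhead : (∑ t ∈ Finset.range K,
        |G.α ^ t * stageExp G G.η (ofStatAll G φ) t (G.c i ℓ)|)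
        ≤ ∑ t ∈ Finset.range K, ((D t : ℝ) + 1) := by
      refine Finset.sum_le_sum fun t _ht => ?_
      rw [abs_mul, abs_of_nonneg (hαpow t)]
      calc G.α ^ t * |stageExp G G.η (ofStatAll G φ) t (G.c i ℓ)|
          ≤ 1 * (wStateExp G G.η (ofStatAll G φ) t w).toReal :=
            mul_le_mul (pow_le_one₀ hαnn hα1.le) (hB1 t) (abs_nonneg _) one_pos.le
        _ ≤ (D t : ℝ) + 1 := by rw [one_mul]; exact hWtoReal t
    have htail2 : (∑' t : ℕ, |G.α ^ (t + K) *
        stageExp G G.η (ofStatAll G φ) (t + K) (G.c i ℓ)|)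
        ≤ ∑' t : ℕ, G.α ^ (K + t) *
          (wStateExp G G.η (ofStatAll G φ) (K + t) w).toReal := by
      refine Summable.tsum_le_tsum (fun t => ?_)
        ((summable_nat_add_iff K).mpr (summable_abs_iff.mpr hsumR)) hsumWtail
      rw [abs_mul, abs_of_nonneg (hαpow _), add_comm t K]
      exact mul_le_mul_of_nonneg_left (hB1 (K + t)) (hαpow _)
    have hheadnn : (0:ℝ) ≤ ∑ t ∈ Finset.range K, ((D t : ℝ) + 1) :=
      Finset.sum_nonneg fun t _ => by positivity
    calc (1 - G.α) * |∑' t : ℕ, G.α ^ t * stageExp G G.η (ofStatAll G φ) t (G.c i ℓ)|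
        ≤ (1 - G.α) * ((∑ t ∈ Finset.range K, ((D t : ℝ) + 1)) + ∑' t : ℕ,
            G.α ^ (K + t) * (wStateExp G G.η (ofStatAll G φ) (K + t) w).toReal) := by
          refine mul_le_mul_of_nonneg_left (le_trans hht (add_le_add hhead htail2)) h1α.le
      _ ≤ 1 * (∑ t ∈ Finset.range K, ((D t : ℝ) + 1)) + (1 - G.α) * ∑' t : ℕ,
            G.α ^ (K + t) * (wStateExp G G.η (ofStatAll G φ) (K + t) w).toReal := by
          have hsumnn : (0:ℝ) ≤ ∑' t : ℕ,
              G.α ^ (K + t) * (wStateExp G G.η (ofStatAll G φ) (K + t) w).toReal :=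
            tsum_nonneg htailnn
          nlinarith [h1α, hα0]
      _ ≤ CJ := by
          rw [one_mul, hCJdef]
          have := htaille
          have : (1 - G.α) * (∑' t : ℕ, G.α ^ (K + t) *
              (wStateExp G G.η (ofStatAll G φ) (K + t) w).toReal) ≤ 1 :=
            le_trans htaille hδ1
          linarith
  -- final assembly
  have hmain : Jm G ηt m i ℓ (ofStatAll G φ) - J G i ℓ (ofStatAll G φ)
      = (1 - 1/m) * ((1 - G.α) * (∑' t : ℕ, G.α ^ t *
          stageExp G G.η (ofStatAll G φ) t (ctrunc G i ℓ m))
          - J G i ℓ (ofStatAll G φ))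
        + (1/m) * ((1 - G.α) * ∑' t : ℕ, G.α ^ t *
          stageExp G ηt (ofStatAll G φ) t (ctrunc G i ℓ m))
        + (1/m) * (-(J G i ℓ (ofStatAll G φ))) := by
    rw [hJm]
    ring
  rw [hmain]
  have htri := abs_add_three
    ((1 - 1/(m:ℝ)) * ((1 - G.α) * (∑' t : ℕ, G.α ^ t *
      stageExp G G.η (ofStatAll G φ) t (ctrunc G i ℓ m)) - J G i ℓ (ofStatAll G φ)))
    ((1/(m:ℝ)) * ((1 - G.α) * ∑' t : ℕ, G.α ^ t *
      stageExp G ηt (ofStatAll G φ) t (ctrunc G i ℓ m)))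
    ((1/(m:ℝ)) * (-(J G i ℓ (ofStatAll G φ))))
  refine le_trans htri ?_
  have e1 : |(1 - 1/(m:ℝ)) * ((1 - G.α) * (∑' t : ℕ, G.α ^ t *
      stageExp G G.η (ofStatAll G φ) t (ctrunc G i ℓ m)) - J G i ℓ (ofStatAll G φ))|
      ≤ ε/8 + ε/4 := by
    rw [abs_mul, abs_of_nonneg hcoef1]
    have h1 : |(1 - G.α) * (∑' t : ℕ, G.α ^ t *
        stageExp G G.η (ofStatAll G φ) t (ctrunc G i ℓ m)) - J G i ℓ (ofStatAll G φ)|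
        ≤ ε/8 + ε/4 := by
      rw [hJeq]
      exact hAJ
    calc (1 - 1/(m:ℝ)) * |(1 - G.α) * (∑' t : ℕ, G.α ^ t *
        stageExp G G.η (ofStatAll G φ) t (ctrunc G i ℓ m)) - J G i ℓ (ofStatAll G φ)|
        ≤ 1 * (ε/8 + ε/4) := by
          refine mul_le_mul (by linarith) h1 (abs_nonneg _) one_pos.le
      _ = ε/8 + ε/4 := one_mul _
  have e2 : |(1/(m:ℝ)) * ((1 - G.α) * ∑' t : ℕ, G.α ^ t *
      stageExp G ηt (ofStatAll G φ) t (ctrunc G i ℓ m))| ≤ ε/8 := by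
    rw [abs_mul, abs_of_nonneg hcoef2]
    have h1 : (1/(m:ℝ)) * |(1 - G.α) * ∑' t : ℕ, G.α ^ t *
        stageExp G ηt (ofStatAll G φ) t (ctrunc G i ℓ m)|
        ≤ (1/(m:ℝ)) * Real.sqrt m := mul_le_mul_of_nonneg_left hBb hcoef2
    have h2 : (1/(m:ℝ)) * Real.sqrt m = 1/Real.sqrt m := by
      rw [div_mul_eq_mul_div, one_mul, eq_div_iff hsqpos.ne']
      rw [div_mul_eq_mul_div, Real.mul_self_sqrt (by positivity : (0:ℝ) ≤ (m:ℝ)),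
        div_self hmRpos.ne']
    linarith [hinvsqrt]
  have e3 : |(1/(m:ℝ)) * (-(J G i ℓ (ofStatAll G φ)))| ≤ ε/8 := by
    rw [abs_mul, abs_neg, abs_of_nonneg hcoef2]
    have h1 : (1/(m:ℝ)) * |J G i ℓ (ofStatAll G φ)| ≤ (1/(m:ℝ)) * CJ :=
      mul_le_mul_of_nonneg_left hJb hcoef2
    have h2 : (1/(m:ℝ)) * CJ = CJ/m := by ring
    linarith [hCJm]
  linarith [e1, e2, e3, hε]







end CSGame
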